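/- Let μ and λ be (nonnegative, Borel) measures on ℝ such that ∫ |x|^k dμ(x) < ∞ and ∫ |x|^k dλ(x) < ∞ for every integer k ≥ 0. Then for every m ≥ 1, det_{1≤i,j≤m}( ∫ x^{i+j−2} d(μ+λ)(x) ) = Σ_{s=0}^{m} (1/(s!·(m−s)!)) · ∫_{ℝ^m} Π_{1≤i<j≤m}(x_j − x_i)² dλ(x_1)⋯dλ(x_s) dμ(x_{s+1})⋯dμ(x_m). -/

import Mathlib

open MeasureTheory MeasureTheory.Measure

/-! ### Auxiliary lemmas -/

theorem isFiniteMeasure_of_moments (ν : Measure ℝ)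
    (h : ∀ k : ℕ, Integrable (fun x : ℝ => |x| ^ k) ν) : IsFiniteMeasure ν := by
  have h0 := h 0
  simp only [pow_zero] at h0
  rcases (integrable_const_iff (c := (1 : ℝ))).mp h0 with h | h
  · exact absurd h one_ne_zero
  · exact h

theorem integrable_pow_of_moments (ν : Measure ℝ)
    (h : ∀ k : ℕ, Integrable (fun x : ℝ => |x| ^ k) ν) (k : ℕ) :
    Integrable (fun x : ℝ => x ^ k) ν := by
  refine (h k).mono' (by fun_prop) (ae_of_all _ fun x => ?_)
  simp [abs_pow, Real.norm_eq_abs]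

theorem integrable_pi_prod : ∀ {n : ℕ} (ν : Fin n → Measure ℝ) [∀ i, SigmaFinite (ν i)]
    (g : Fin n → ℝ → ℝ), (∀ i, Integrable (g i) (ν i)) →
    Integrable (fun y : Fin n → ℝ => ∏ i, g i (y i)) (Measure.pi ν) := by
  intro n
  induction n with
  | zero =>
      intro ν _ g hg
      simp only [Finset.univ_eq_empty, Finset.prod_empty, integrable_const_iff, one_ne_zero,
        pi_empty_univ, ENNReal.one_lt_top, or_true, false_or]
      exact ⟨by rw [pi_empty_univ]; exact ENNReal.one_lt_top⟩
  | succ n ih =>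
      intro ν _ g hg
      have h := ((measurePreserving_piFinSuccAbove ν 0).symm)
      rw [← h.integrable_comp_emb (MeasurableEquiv.measurableEmbedding _)]
      simp_rw [MeasurableEquiv.piFinSuccAbove_symm_apply, Fin.insertNthEquiv,
        Fin.prod_univ_succ, Fin.insertNth_zero]
      simp only [Fin.zero_succAbove, cast_eq, Function.comp_def, Fin.cons_zero, Fin.cons_succ,
        Equiv.coe_fn_mk]
      exact Integrable.mul_prod (hg 0) (ih _ _ (fun i => hg _))

theorem integral_pi_prod : ∀ {n : ℕ} (ν : Fin n → Measure ℝ) [∀ i, SigmaFinite (ν i)]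
    (g : Fin n → ℝ → ℝ),
    ∫ y : Fin n → ℝ, ∏ i, g i (y i) ∂(Measure.pi ν) = ∏ i, ∫ x, g i x ∂(ν i) := by
  intro n
  induction n with
  | zero =>
      intro ν _ g
      simp only [Finset.univ_eq_empty, Finset.prod_empty, integral_const, pi_empty_univ,
        measureReal_def, ENNReal.toReal_one, smul_eq_mul, mul_one, one_smul]
  | succ n ih =>
      intro ν _ g
      calc
        _ = ∫ p : ℝ × (Fin n → ℝ), g 0 p.1 * ∏ i : Fin n, g i.succ (p.2 i)
            ∂((ν 0).prod (Measure.pi fun i => ν i.succ)) := by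
          rw [← ((measurePreserving_piFinSuccAbove ν 0).symm).integral_comp']
          simp_rw [MeasurableEquiv.piFinSuccAbove_symm_apply, Fin.insertNthEquiv,
            Fin.prod_univ_succ, Fin.insertNth_zero, Equiv.coe_fn_mk, Fin.cons_succ,
            Fin.zero_succAbove, cast_eq, Fin.cons_zero]
        _ = (∫ x, g 0 x ∂(ν 0)) * ∏ i : Fin n, ∫ x, g i.succ x ∂(ν i.succ) := by
          rw [integral_prod_mul (f := g 0) (g := fun z : Fin n → ℝ => ∏ i, g i.succ (z i)), ih]
        _ = ∏ i, ∫ x, g i x ∂(ν i) := by rw [Fin.prod_univ_succ]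

/-! ### Vandermonde algebra -/

theorem vdm_eq {m : ℕ} (y : Fin m → ℝ) :
    (∏ i : Fin m, ∏ j ∈ Finset.Ioi i, (y j - y i)) =
      ∑ σ : Equiv.Perm (Fin m), ((Equiv.Perm.sign σ : ℤ) : ℝ) * ∏ i, y i ^ ((σ i : Fin m) : ℕ) := by
  rw [← Matrix.det_vandermonde y, ← Matrix.det_transpose, Matrix.det_apply']
  refine Finset.sum_congr rfl fun σ _ => ?_
  congr 1

theorem vdm_perm {m : ℕ} (σ : Equiv.Perm (Fin m)) (y : Fin m → ℝ) :
    (∏ i : Fin m, ∏ j ∈ Finset.Ioi i, (y (σ j) - y (σ i))) =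
      ((Equiv.Perm.sign σ : ℤ) : ℝ) * ∏ i : Fin m, ∏ j ∈ Finset.Ioi i, (y j - y i) := by
  rw [← Matrix.det_vandermonde y, ← Matrix.det_vandermonde (fun i => y (σ i))]
  have h : Matrix.vandermonde (fun i => y (σ i)) = (Matrix.vandermonde y).submatrix σ id := by
    ext i j; simp [Matrix.vandermonde]
  rw [h, Matrix.det_permute]

/-! ### The symmetrized integral `T` -/

noncomputable def hankelT {m : ℕ} (κ : Fin m → Measure ℝ) : ℝ :=
  ∫ y : Fin m → ℝ, (∏ i : Fin m, ∏ j ∈ Finset.Ioi i, (y j - y i)) * ∏ i : Fin m, y i ^ (i : ℕ)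
    ∂Measure.pi κ

section main
variable {m : ℕ} (κ : Fin m → Measure ℝ) [∀ i, SigmaFinite (κ i)]
  (hκ : ∀ i, ∀ k : ℕ, Integrable (fun x : ℝ => |x| ^ k) (κ i))

include hκ in
theorem mono_integrable (d : Fin m → ℕ) :
    Integrable (fun y : Fin m → ℝ => ∏ i, y i ^ d i) (Measure.pi κ) :=
  integrable_pi_prod κ (fun i x => x ^ d i)
    (fun i => integrable_pow_of_moments _ (hκ i) (d i))

include hκ in
theorem vdm_mono_integrable (d : Fin m → ℕ) :
    Integrable (fun y : Fin m → ℝ =>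
      (∏ i : Fin m, ∏ j ∈ Finset.Ioi i, (y j - y i)) * ∏ i, y i ^ d i) (Measure.pi κ) := by
  have h : (fun y : Fin m → ℝ =>
      (∏ i : Fin m, ∏ j ∈ Finset.Ioi i, (y j - y i)) * ∏ i, y i ^ d i) =
      fun y => ∑ σ : Equiv.Perm (Fin m),
        ((Equiv.Perm.sign σ : ℤ) : ℝ) * ∏ i, y i ^ (((σ i : Fin m) : ℕ) + d i) := by
    funext y
    rw [vdm_eq, Finset.sum_mul]
    refine Finset.sum_congr rfl fun σ _ => ?_
    rw [mul_assoc, ← Finset.prod_mul_distrib]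
    simp_rw [← pow_add]
  rw [h]
  exact integrable_finset_sum _ fun σ _ => (mono_integrable κ hκ _).const_mul _

include hκ in
theorem det_col_eq :
    ∑ σ : Equiv.Perm (Fin m), ((Equiv.Perm.sign σ : ℤ) : ℝ) *
        ∏ j, ∫ x : ℝ, x ^ (((σ j : Fin m) : ℕ) + (j : ℕ)) ∂(κ j) = hankelT κ := by
  have h1 : ∀ σ : Equiv.Perm (Fin m),
      (∏ j, ∫ x : ℝ, x ^ (((σ j : Fin m) : ℕ) + (j : ℕ)) ∂(κ j)) =
      ∫ y : Fin m → ℝ, ∏ j, y j ^ (((σ j : Fin m) : ℕ) + (j : ℕ)) ∂(Measure.pi κ) :=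
    fun σ => (integral_pi_prod κ (fun j x => x ^ (((σ j : Fin m) : ℕ) + (j : ℕ)))).symm
  simp_rw [h1, ← MeasureTheory.integral_const_mul]
  rw [← integral_finset_sum _
    (fun σ _ => ((mono_integrable κ hκ _)).const_mul _)]
  unfold hankelT
  congr 1
  funext y
  rw [vdm_eq, Finset.sum_mul]
  refine Finset.sum_congr rfl fun σ _ => ?_
  rw [mul_assoc, ← Finset.prod_mul_distrib]
  simp_rw [← pow_add]

theorem hankelT_perm (σ : Equiv.Perm (Fin m)) :
    ∫ y : Fin m → ℝ, (∏ i : Fin m, ∏ j ∈ Finset.Ioi i, (y j - y i)) *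
        ∏ j : Fin m, y j ^ ((σ j : Fin m) : ℕ) ∂(Measure.pi κ) =
      ((Equiv.Perm.sign σ : ℤ) : ℝ) * hankelT (κ ∘ ⇑σ⁻¹) := by
  haveI : ∀ i, SigmaFinite ((κ ∘ ⇑σ⁻¹) i) := fun i => ‹∀ i, SigmaFinite (κ i)› _
  have h := MeasureTheory.measurePreserving_piCongrLeft (α := fun _ : Fin m => ℝ) κ
    (σ⁻¹ : Fin m ≃ Fin m)
  rw [← h.integral_comp']
  have hpc : ∀ (g : Fin m → ℝ) (j : Fin m),
      (MeasurableEquiv.piCongrLeft (fun _ : Fin m => ℝ) (σ⁻¹ : Fin m ≃ Fin m)) g j = g (σ j) := by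
    intro g j
    simp [MeasurableEquiv.coe_piCongrLeft, Equiv.Perm.inv_def, Equiv.piCongrLeft_apply]
  have key : ∀ g : Fin m → ℝ,
      (∏ i : Fin m, ∏ j ∈ Finset.Ioi i,
          ((MeasurableEquiv.piCongrLeft (fun _ : Fin m => ℝ) (σ⁻¹ : Fin m ≃ Fin m)) g j -
           (MeasurableEquiv.piCongrLeft (fun _ : Fin m => ℝ) (σ⁻¹ : Fin m ≃ Fin m)) g i)) *
        ∏ j : Fin m, ((MeasurableEquiv.piCongrLeft (fun _ : Fin m => ℝ) (σ⁻¹ : Fin m ≃ Fin m)) g j)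
          ^ ((σ j : Fin m) : ℕ) =
      ((Equiv.Perm.sign σ : ℤ) : ℝ) *
        ((∏ i : Fin m, ∏ j ∈ Finset.Ioi i, (g j - g i)) * ∏ i : Fin m, g i ^ (i : ℕ)) := by
    intro g
    simp_rw [hpc]
    rw [vdm_perm σ g]
    have hprod : (∏ j : Fin m, g (σ j) ^ ((σ j : Fin m) : ℕ)) = ∏ i : Fin m, g i ^ (i : ℕ) :=
      Equiv.prod_comp σ (fun i => g i ^ (i : ℕ))
    rw [hprod]; ring
  simp_rw [key]
  rw [MeasureTheory.integral_const_mul]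
  rfl

include hκ in
theorem sq_integral :
    ∫ y : Fin m → ℝ, (∏ i : Fin m, ∏ j ∈ Finset.Ioi i, (y j - y i)) ^ 2 ∂(Measure.pi κ) =
      ∑ σ : Equiv.Perm (Fin m), hankelT (κ ∘ ⇑σ) := by
  have expand : (fun y : Fin m → ℝ => (∏ i : Fin m, ∏ j ∈ Finset.Ioi i, (y j - y i)) ^ 2) =
      fun y => ∑ σ : Equiv.Perm (Fin m), ((Equiv.Perm.sign σ : ℤ) : ℝ) *
        ((∏ i : Fin m, ∏ j ∈ Finset.Ioi i, (y j - y i)) *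
          ∏ j : Fin m, y j ^ ((σ j : Fin m) : ℕ)) := by
    funext y
    rw [sq]
    nth_rewrite 2 [vdm_eq y]
    rw [Finset.mul_sum]
    refine Finset.sum_congr rfl fun σ _ => ?_
    ring
  rw [expand]
  rw [integral_finset_sum _ (fun σ _ => ((vdm_mono_integrable κ hκ _)).const_mul _)]
  have step : ∀ σ : Equiv.Perm (Fin m),
      ∫ y : Fin m → ℝ, ((Equiv.Perm.sign σ : ℤ) : ℝ) *
        ((∏ i : Fin m, ∏ j ∈ Finset.Ioi i, (y j - y i)) *
          ∏ j : Fin m, y j ^ ((σ j : Fin m) : ℕ)) ∂(Measure.pi κ) = hankelT (κ ∘ ⇑σ⁻¹) := by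
    intro σ
    rw [MeasureTheory.integral_const_mul, hankelT_perm κ σ, ← mul_assoc]
    rcases Int.units_eq_one_or (Equiv.Perm.sign σ) with h | h <;> simp [h]
  simp_rw [step]
  exact Fintype.sum_equiv (Equiv.inv (Equiv.Perm (Fin m))) _ _ (fun σ => rfl)

end main

/-! ### Counting permutations with a given lower-set preimage -/

theorem card_filter_val_lt {m s : ℕ} (hs : s ≤ m) :
    (Finset.univ.filter (fun i : Fin m => (i : ℕ) < s)).card = s := by
  rw [← Finset.card_range s]
  apply Finset.card_bij (fun (a : Fin m) _ => (a : ℕ))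
  · intro a ha; simpa using (Finset.mem_filter.mp ha).2
  · intro a _ b _ h; exact Fin.ext h
  · intro b hb
    exact ⟨⟨b, lt_of_lt_of_le (Finset.mem_range.mp hb) hs⟩, by simpa using Finset.mem_range.mp hb,
      rfl⟩

theorem card_filter_perm_lt {m s : ℕ} (hs : s ≤ m) (σ : Equiv.Perm (Fin m)) :
    (Finset.univ.filter (fun j : Fin m => ((σ j : Fin m) : ℕ) < s)).card = s := by
  have key : (Finset.univ.filter (fun j : Fin m => ((σ j : Fin m) : ℕ) < s)).card =
      (Finset.univ.filter (fun i : Fin m => (i : ℕ) < s)).card := by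
    apply Finset.card_bij (fun a _ => σ a)
    · intro a ha; simpa using (Finset.mem_filter.mp ha).2
    · intro a _ b _ h; exact σ.injective h
    · intro b hb
      exact ⟨σ⁻¹ b, by simpa using (Finset.mem_filter.mp hb).2, by simp⟩
  rw [key, card_filter_val_lt hs]

/-- Permutations with a given "lower set" preimage, as an equiv to a product. -/
def fiberEquiv {m s : ℕ} (S : Finset (Fin m)) :
    {σ : Equiv.Perm (Fin m) // ∀ j, (((σ j : Fin m) : ℕ) < s ↔ j ∈ S)} ≃
      ({x : Fin m // x ∈ S} ≃ {x : Fin m // (x : ℕ) < s}) ×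
        ({x : Fin m // x ∉ S} ≃ {x : Fin m // ¬ (x : ℕ) < s}) where
  toFun := fun ⟨σ, h⟩ =>
    ⟨Equiv.subtypeEquiv σ (fun a => (h a).symm),
     Equiv.subtypeEquiv σ (fun a => not_congr (h a).symm)⟩
  invFun := fun p =>
    ⟨(Equiv.sumCompl (· ∈ S)).symm.trans ((p.1.sumCongr p.2).trans
        (Equiv.sumCompl (fun x : Fin m => (x : ℕ) < s))), by
      intro j
      by_cases hj : j ∈ S
      · simp only [Equiv.trans_apply, Equiv.sumCompl_symm_apply_of_pos (p := (· ∈ S)) hj,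
          Equiv.sumCongr_apply, Sum.map_inl, Equiv.sumCompl_apply_inl]
        exact ⟨fun _ => hj, fun _ => (p.1 ⟨j, hj⟩).2⟩
      · simp only [Equiv.trans_apply, Equiv.sumCompl_symm_apply_of_neg (p := (· ∈ S)) hj,
          Equiv.sumCongr_apply, Sum.map_inr, Equiv.sumCompl_apply_inr]
        exact ⟨fun h => absurd h (p.2 ⟨j, hj⟩).2, fun h => absurd h hj⟩⟩
  left_inv := fun ⟨σ, h⟩ => by
    ext j
    by_cases hj : j ∈ S
    · simp [Equiv.sumCompl_symm_apply_of_pos (p := (· ∈ S)) hj]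
    · simp [Equiv.sumCompl_symm_apply_of_neg (p := (· ∈ S)) hj]
  right_inv := fun ⟨e₁, e₂⟩ => by
    refine Prod.ext (Equiv.ext fun a => Subtype.ext ?_) (Equiv.ext fun a => Subtype.ext ?_)
    · simp [Equiv.sumCompl_symm_apply_of_pos (p := (· ∈ S)) a.2]
    · simp [Equiv.sumCompl_symm_apply_of_neg (p := (· ∈ S)) a.2]

theorem fiber_card {m s : ℕ} (hs : s ≤ m) (S : Finset (Fin m)) (hS : S.card = s) :
    (Finset.univ.filter (fun σ : Equiv.Perm (Fin m) =>
      Finset.univ.filter (fun j : Fin m => ((σ j : Fin m) : ℕ) < s) = S)).card =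
      s.factorial * (m - s).factorial := by
  rw [← Fintype.card_subtype]
  have e0 : {σ : Equiv.Perm (Fin m) //
        Finset.univ.filter (fun j : Fin m => ((σ j : Fin m) : ℕ) < s) = S} ≃
      {σ : Equiv.Perm (Fin m) // ∀ j, (((σ j : Fin m) : ℕ) < s ↔ j ∈ S)} := by
    apply Equiv.subtypeEquivRight
    intro σ
    rw [Finset.ext_iff]
    simp [Finset.mem_filter]
  rw [Fintype.card_congr (e0.trans (fiberEquiv S))]
  rw [Fintype.card_prod]
  have c1 : Fintype.card {x : Fin m // x ∈ S} = s := by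
    rw [Fintype.card_coe]; exact hS
  have c2 : Fintype.card {x : Fin m // (x : ℕ) < s} = s := by
    rw [Fintype.card_subtype]; exact card_filter_val_lt hs
  have c3 : Fintype.card {x : Fin m // x ∉ S} = m - s := by
    rw [Fintype.card_subtype_compl, Fintype.card_fin, c1]
  have c4 : Fintype.card {x : Fin m // ¬ (x : ℕ) < s} = m - s := by
    rw [Fintype.card_subtype_compl, Fintype.card_fin, c2]
  rw [Fintype.card_equiv (Fintype.equivOfCardEq (c1.trans c2.symm)),
    Fintype.card_equiv (Fintype.equivOfCardEq (c3.trans c4.symm)), c1, c3]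

theorem perm_sum_eq {m s : ℕ} (hs : s ≤ m) (F : Finset (Fin m) → ℝ) :
    ∑ σ : Equiv.Perm (Fin m),
        F (Finset.univ.filter (fun j : Fin m => ((σ j : Fin m) : ℕ) < s)) =
      ∑ S ∈ Finset.powersetCard s (Finset.univ : Finset (Fin m)),
        ((s.factorial * (m - s).factorial : ℕ) : ℝ) * F S := by
  rw [← Finset.sum_fiberwise_of_maps_to (g := fun σ : Equiv.Perm (Fin m) =>
      Finset.univ.filter (fun j : Fin m => ((σ j : Fin m) : ℕ) < s))
      (fun σ _ => Finset.mem_powersetCard_univ.mpr (card_filter_perm_lt hs σ))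
      (fun σ => F (Finset.univ.filter (fun j : Fin m => ((σ j : Fin m) : ℕ) < s)))]
  refine Finset.sum_congr rfl fun S hS => ?_
  have hScard : S.card = s := Finset.mem_powersetCard_univ.mp hS
  have hc : ∀ σ ∈ Finset.univ.filter (fun σ : Equiv.Perm (Fin m) =>
      Finset.univ.filter (fun j : Fin m => ((σ j : Fin m) : ℕ) < s) = S),
      F (Finset.univ.filter (fun j : Fin m => ((σ j : Fin m) : ℕ) < s)) = F S :=
    fun σ hσ => by rw [(Finset.mem_filter.mp hσ).2]
  rw [Finset.sum_congr rfl hc, Finset.sum_const, fiber_card hs S hScard, nsmul_eq_mul]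

/-! ### Main theorem -/

/-- Hankel determinant of a sum of two measures:
`det(∫ x^{i+j−2} d(μ+λ)) = Σ_{s=0}^{m} (1/(s!(m−s)!)) ∫ Π_{i<j}(x_j−x_i)²
  dλ(x_1)⋯dλ(x_s) dμ(x_{s+1})⋯dμ(x_m)`. -/
theorem hankel_det_add_eq_sum (μ lam : Measure ℝ)
    (hμ : ∀ k : ℕ, Integrable (fun x : ℝ => |x| ^ k) μ)
    (hlam : ∀ k : ℕ, Integrable (fun x : ℝ => |x| ^ k) lam)
    (m : ℕ) (hm : 1 ≤ m) :
    Matrix.det (Matrix.of fun i j : Fin m => ∫ x : ℝ, x ^ ((i : ℕ) + (j : ℕ)) ∂(μ + lam)) =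
      ∑ s ∈ Finset.range (m + 1),
        (1 / ((Nat.factorial s : ℝ) * (Nat.factorial (m - s) : ℝ))) *
          ∫ y : Fin m → ℝ, (∏ i : Fin m, ∏ j ∈ Finset.Ioi i, (y j - y i)) ^ 2
            ∂(Measure.pi fun i : Fin m => if (i : ℕ) < s then lam else μ) := by
  haveI : IsFiniteMeasure μ := isFiniteMeasure_of_moments μ hμ
  haveI : IsFiniteMeasure lam := isFiniteMeasure_of_moments lam hlam
  -- the measure family attached to a subset
  set ν : Finset (Fin m) → Fin m → Measure ℝ :=
    fun S i => if i ∈ S then lam else μ with hν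
  have hνmom : ∀ (S : Finset (Fin m)) (i : Fin m) (k : ℕ),
      Integrable (fun x : ℝ => |x| ^ k) (ν S i) := by
    intro S i k
    by_cases h : i ∈ S <;> simp [hν, h, hμ k, hlam k]
  haveI hνsf : ∀ S : Finset (Fin m), ∀ i, SigmaFinite (ν S i) := by
    intro S i
    by_cases h : i ∈ S <;> simp [hν, h] <;> infer_instance
  -- Step 1 : expand the determinant over subsets
  have step1 : Matrix.det (Matrix.of fun i j : Fin m =>
        ∫ x : ℝ, x ^ ((i : ℕ) + (j : ℕ)) ∂(μ + lam)) =
      ∑ S ∈ (Finset.univ : Finset (Fin m)).powerset, hankelT (ν S) := by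
    rw [Matrix.det_apply']
    have entry : ∀ σ : Equiv.Perm (Fin m), ∀ j : Fin m,
        (Matrix.of fun i j : Fin m => ∫ x : ℝ, x ^ ((i : ℕ) + (j : ℕ)) ∂(μ + lam)) (σ j) j =
        (∫ x : ℝ, x ^ (((σ j : Fin m) : ℕ) + (j : ℕ)) ∂lam) +
        ∫ x : ℝ, x ^ (((σ j : Fin m) : ℕ) + (j : ℕ)) ∂μ := by
      intro σ j
      simp only [Matrix.of_apply]
      rw [integral_add_measure (integrable_pow_of_moments μ hμ _)
        (integrable_pow_of_moments lam hlam _), add_comm]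
    have expand : ∀ σ : Equiv.Perm (Fin m),
        (∏ j, (Matrix.of fun i j : Fin m =>
          ∫ x : ℝ, x ^ ((i : ℕ) + (j : ℕ)) ∂(μ + lam)) (σ j) j) =
        ∑ S ∈ (Finset.univ : Finset (Fin m)).powerset,
          ∏ j, ∫ x : ℝ, x ^ (((σ j : Fin m) : ℕ) + (j : ℕ)) ∂(ν S j) := by
      intro σ
      calc (∏ j, (Matrix.of fun i j : Fin m =>
            ∫ x : ℝ, x ^ ((i : ℕ) + (j : ℕ)) ∂(μ + lam)) (σ j) j)
          = ∏ j, ((∫ x : ℝ, x ^ (((σ j : Fin m) : ℕ) + (j : ℕ)) ∂lam) +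
              ∫ x : ℝ, x ^ (((σ j : Fin m) : ℕ) + (j : ℕ)) ∂μ) :=
            Finset.prod_congr rfl fun j _ => entry σ j
        _ = ∑ S ∈ (Finset.univ : Finset (Fin m)).powerset,
              (∏ j ∈ S, ∫ x : ℝ, x ^ (((σ j : Fin m) : ℕ) + (j : ℕ)) ∂lam) *
              ∏ j ∈ Finset.univ \ S, ∫ x : ℝ, x ^ (((σ j : Fin m) : ℕ) + (j : ℕ)) ∂μ :=
            Finset.prod_add _ _ _
        _ = ∑ S ∈ (Finset.univ : Finset (Fin m)).powerset,
              ∏ j, ∫ x : ℝ, x ^ (((σ j : Fin m) : ℕ) + (j : ℕ)) ∂(ν S j) := by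
            refine Finset.sum_congr rfl fun S hS => ?_
            rw [← Finset.prod_filter_mul_prod_filter_not Finset.univ (· ∈ S)]
            congr 1
            · rw [Finset.filter_univ_mem]
              exact Finset.prod_congr rfl fun j hj => by simp [hν, hj]
            · rw [Finset.sdiff_eq_filter]
              exact Finset.prod_congr rfl fun j hj => by
                simp only [Finset.mem_filter] at hj
                simp [hν, hj.2]
    simp_rw [expand, Finset.mul_sum]
    rw [Finset.sum_comm]
    refine Finset.sum_congr rfl fun S _ => ?_
    haveI := hνsf S
    exact det_col_eq (ν S) (hνmom S)
  -- Step 2 : each summand on the right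
  have step2 : ∀ s ∈ Finset.range (m + 1),
      (1 / ((Nat.factorial s : ℝ) * (Nat.factorial (m - s) : ℝ))) *
          ∫ y : Fin m → ℝ, (∏ i : Fin m, ∏ j ∈ Finset.Ioi i, (y j - y i)) ^ 2
            ∂(Measure.pi fun i : Fin m => if (i : ℕ) < s then lam else μ) =
      ∑ S ∈ Finset.powersetCard s (Finset.univ : Finset (Fin m)), hankelT (ν S) := by
    intro s hs
    have hsm : s ≤ m := Nat.lt_succ_iff.mp (Finset.mem_range.mp hs)
    set κ : Fin m → Measure ℝ := fun i => if (i : ℕ) < s then lam else μ with hκdef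
    haveI : ∀ i, SigmaFinite (κ i) := by
      intro i; by_cases h : (i : ℕ) < s <;> simp [hκdef, h] <;> infer_instance
    have hκmom : ∀ i, ∀ k : ℕ, Integrable (fun x : ℝ => |x| ^ k) (κ i) := by
      intro i k; by_cases h : (i : ℕ) < s <;> simp [hκdef, h, hμ k, hlam k]
    rw [sq_integral κ hκmom]
    have hcomp : ∀ σ : Equiv.Perm (Fin m), κ ∘ ⇑σ =
        ν (Finset.univ.filter (fun j : Fin m => ((σ j : Fin m) : ℕ) < s)) := by
      intro σ
      funext j
      simp [hκdef, hν, Finset.mem_filter]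
    simp_rw [hcomp]
    rw [perm_sum_eq hsm (fun S => hankelT (ν S)), ← Finset.mul_sum, ← mul_assoc]
    have hpos : ((s.factorial * (m - s).factorial : ℕ) : ℝ) ≠ 0 := by
      positivity
    rw [Nat.cast_mul, one_div, inv_mul_cancel₀ (by push_cast at hpos ⊢; exact hpos), one_mul]
  rw [step1, Finset.sum_congr rfl step2]
  rw [Finset.powerset_card_disjiUnion, Finset.sum_disjiUnion _ _
    ((Finset.univ : Finset (Fin m)).pairwise_disjoint_powersetCard.set_pairwise _)]
  congr 1
  rw [Finset.card_univ, Fintype.card_fin]
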